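/- arXiv:1311.5961 — 2 statements merged into one kernel-verified Lean document; each statement's English description precedes it below -/
import Mathlib

section
/- For a real number a > 0 and an integer b with 0 ≤ b < a+1, the rising factorial satisfies exp(-b^3/(6a^2)) ≤ a^{(b)} / (a^b · exp(b(b-1)/(2a))) ≤ 1, where a^{(b)} = a(a+1)···(a+b-1). -/
open Finset Real

/-- The rising factorial `a^{(b)} = a(a+1)⋯(a+b-1)`. -/
noncomputable def risingFac (a : ℝ) (b : ℕ) : ℝ := ∏ j ∈ Finset.range b, (a + j)

lemma exp_sub_sq_le (x : ℝ) (hx : 0 ≤ x) : Real.exp (x - x ^ 2 / 2) ≤ 1 + x := by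
  have hmono : Monotone (fun x : ℝ => (1 + x) * Real.exp (x ^ 2 / 2 - x)) := by
    apply monotone_of_deriv_nonneg
    · fun_prop
    · intro y
      have h : HasDerivAt (fun x : ℝ => (1 + x) * Real.exp (x ^ 2 / 2 - x))
          (Real.exp (y ^ 2 / 2 - y) * y ^ 2) y := by
        have h1 : HasDerivAt (fun x : ℝ => x ^ 2 / 2 - x) (y - 1) y := by
          simpa using ((hasDerivAt_pow 2 y).div_const 2).fun_sub (hasDerivAt_id y)
        have h3 : HasDerivAt (fun x : ℝ => (1 + x) * Real.exp (x ^ 2 / 2 - x))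
            (1 * Real.exp (y ^ 2 / 2 - y) + (1 + id y) * (Real.exp (y ^ 2 / 2 - y) * (y - 1))) y :=
          ((hasDerivAt_id y).const_add 1).fun_mul h1.exp
        convert h3 using 1
        simp only [id_eq]
        ring
      rw [h.deriv]
      positivity
  have h0 := hmono hx
  simp only [add_zero, ne_eq, OfNat.ofNat_ne_zero, not_false_eq_true, zero_pow, zero_div,
    zero_sub, neg_zero, Real.exp_zero, mul_one, one_mul] at h0
  have h1 := mul_le_mul_of_nonneg_left h0 (Real.exp_pos (x - x ^ 2 / 2)).le
  rw [mul_one] at h1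
  calc Real.exp (x - x ^ 2 / 2) ≤ Real.exp (x - x ^ 2 / 2) * ((1 + x) * Real.exp (x ^ 2 / 2 - x)) := h1
    _ = (1 + x) * Real.exp ((x - x ^ 2 / 2) + (x ^ 2 / 2 - x)) := by rw [Real.exp_add]; ring
    _ = 1 + x := by norm_num

lemma sum_range_id' (b : ℕ) : ∑ j ∈ Finset.range b, (j : ℝ) = (b : ℝ) * ((b : ℝ) - 1) / 2 := by
  induction b with
  | zero => simp
  | succ n ih => rw [Finset.sum_range_succ, ih]; push_cast; ring

lemma sum_range_sq_le (b : ℕ) : ∑ j ∈ Finset.range b, (j : ℝ) ^ 2 ≤ (b : ℝ) ^ 3 / 3 := by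
  induction b with
  | zero => simp
  | succ n ih =>
      rw [Finset.sum_range_succ]
      push_cast
      nlinarith [ih, Nat.cast_nonneg (α := ℝ) n]

theorem risingFac_rough_bounds (a : ℝ) (ha : 0 < a) (b : ℕ) (hb : (b : ℝ) < a + 1) :
    Real.exp (-(b : ℝ) ^ 3 / (6 * a ^ 2)) ≤
      risingFac a b / (a ^ b * Real.exp ((b : ℝ) * ((b : ℝ) - 1) / (2 * a))) ∧
    risingFac a b / (a ^ b * Real.exp ((b : ℝ) * ((b : ℝ) - 1) / (2 * a))) ≤ 1 := by
  have hD : (0 : ℝ) < a ^ b * Real.exp ((b : ℝ) * ((b : ℝ) - 1) / (2 * a)) := by positivity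
  have hDprod : a ^ b * Real.exp ((b : ℝ) * ((b : ℝ) - 1) / (2 * a)) =
      ∏ j ∈ Finset.range b, (a * Real.exp ((j : ℝ) / a)) := by
    rw [Finset.prod_mul_distrib, Finset.prod_const, Finset.card_range, ← Real.exp_sum,
      ← Finset.sum_div, sum_range_id']
    ring_nf
  constructor
  · -- lower bound
    rw [le_div_iff₀ hD]
    have key : Real.exp (-(b : ℝ) ^ 3 / (6 * a ^ 2)) *
        (a ^ b * Real.exp ((b : ℝ) * ((b : ℝ) - 1) / (2 * a))) ≤
        ∏ j ∈ Finset.range b, (a * Real.exp ((j : ℝ) / a - ((j : ℝ) / a) ^ 2 / 2)) := by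
      rw [Finset.prod_mul_distrib, Finset.prod_const, Finset.card_range, ← Real.exp_sum]
      have hrw : Real.exp (-(b : ℝ) ^ 3 / (6 * a ^ 2)) *
          (a ^ b * Real.exp ((b : ℝ) * ((b : ℝ) - 1) / (2 * a))) =
          a ^ b * Real.exp (-(b : ℝ) ^ 3 / (6 * a ^ 2) + (b : ℝ) * ((b : ℝ) - 1) / (2 * a)) := by
        rw [Real.exp_add]; ring
      rw [hrw]
      gcongr
      have h1 : ∑ j ∈ Finset.range b, ((j : ℝ) / a - ((j : ℝ) / a) ^ 2 / 2) =
          (∑ j ∈ Finset.range b, (j : ℝ)) / a -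
          (∑ j ∈ Finset.range b, (j : ℝ) ^ 2) / (2 * a ^ 2) := by
        rw [Finset.sum_sub_distrib, Finset.sum_div, Finset.sum_div]
        congr 1
        apply Finset.sum_congr rfl
        intro j _
        ring
      rw [h1, sum_range_id']
      have h2 := sum_range_sq_le b
      have ha2 : (0 : ℝ) < a ^ 2 := by positivity
      have : (∑ j ∈ Finset.range b, (j : ℝ) ^ 2) / (2 * a ^ 2) ≤ (b : ℝ) ^ 3 / 3 / (2 * a ^ 2) := by
        gcongr
      have e1 : (b : ℝ) * ((b : ℝ) - 1) / 2 / a = (b : ℝ) * ((b : ℝ) - 1) / (2 * a) := by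
        ring
      have e2 : (b : ℝ) ^ 3 / 3 / (2 * a ^ 2) = (b : ℝ) ^ 3 / (6 * a ^ 2) := by ring
      have e3 : -(b : ℝ) ^ 3 / (6 * a ^ 2) = -((b : ℝ) ^ 3 / (6 * a ^ 2)) := by ring
      rw [e2] at this
      rw [e3, e1]
      linarith
    refine key.trans ?_
    unfold risingFac
    apply Finset.prod_le_prod
    · intro j _; positivity
    · intro j hj
      have hj' : (j : ℝ) / a ≥ 0 := by positivity
      have := exp_sub_sq_le ((j : ℝ) / a) hj'
      calc a * Real.exp ((j : ℝ) / a - ((j : ℝ) / a) ^ 2 / 2) ≤ a * (1 + (j : ℝ) / a) := by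
            gcongr
        _ = a + j := by field_simp
  · -- upper bound
    rw [div_le_one hD, hDprod]
    unfold risingFac
    apply Finset.prod_le_prod
    · intro j hj
      have : (0 : ℝ) ≤ (j : ℝ) := Nat.cast_nonneg j
      linarith
    · intro j _
      have h := Real.add_one_le_exp ((j : ℝ) / a)
      calc a + (j : ℝ) = a * ((j : ℝ) / a + 1) := by field_simp; ring
        _ ≤ a * Real.exp ((j : ℝ) / a) := by gcongr
end

section
/- For a real number a > 0 and an integer b with 0 ≤ b < a+1, the rising factorial satisfies 1 ≤ a^{(b)} / (a^b · exp(b(b-1)/(2a) - b(b-1)(2b-1)/(12a^2))) ≤ exp(b^4/(12a^3)). -/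
open Finset Real

lemma sum_id_real (b : ℕ) : ∑ j ∈ Finset.range b, (j : ℝ) = b * (b - 1) / 2 := by
  induction b with
  | zero => simp
  | succ n ih => rw [Finset.sum_range_succ, ih]; push_cast; ring

lemma sum_sq_real (b : ℕ) :
    ∑ j ∈ Finset.range b, (j : ℝ) ^ 2 = b * (b - 1) * (2 * b - 1) / 6 := by
  induction b with
  | zero => simp
  | succ n ih => rw [Finset.sum_range_succ, ih]; push_cast; ring

lemma sum_cube_real (b : ℕ) :
    ∑ j ∈ Finset.range b, (j : ℝ) ^ 3 = b ^ 2 * (b - 1) ^ 2 / 4 := by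
  induction b with
  | zero => simp
  | succ n ih => rw [Finset.sum_range_succ, ih]; push_cast; ring

lemma hasDerivAt_aux (y : ℝ) (hy : -1 < y) :
    HasDerivAt (fun t : ℝ => Real.log (1 + t)) (1 / (1 + y)) y := by
  have h1 : HasDerivAt (fun t : ℝ => 1 + t) 1 y := by
    simpa using (hasDerivAt_id y).const_add 1
  have h2 := (Real.hasDerivAt_log (by linarith : (1 : ℝ) + y ≠ 0)).comp y h1
  rw [one_div]; simp at h2; exact h2

lemma log_one_add_ge (x : ℝ) (hx : 0 ≤ x) : x - x ^ 2 / 2 ≤ Real.log (1 + x) := by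
  have key : MonotoneOn (fun t : ℝ => Real.log (1 + t) - (t - t ^ 2 / 2)) (Set.Ici 0) := by
    have hd : ∀ y : ℝ, 0 < y →
        HasDerivAt (fun t : ℝ => Real.log (1 + t) - (t - t ^ 2 / 2))
          (1 / (1 + y) - (1 - y)) y := by
      intro y hy
      have h3 : HasDerivAt (fun t : ℝ => t - t ^ 2 / 2) (1 - y) y := by
        have := ((hasDerivAt_id y).sub (((hasDerivAt_pow 2 y)).div_const 2))
        simp at this; exact this
      exact (hasDerivAt_aux y (by linarith)).sub h3
    apply monotoneOn_of_deriv_nonneg (convex_Ici 0)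
    · apply ContinuousOn.sub
      · exact (Real.continuousOn_log.comp (by fun_prop)
          (fun t ht => by simp only [Set.mem_Ici] at ht; simp; positivity)).congr
          (fun t ht => rfl)
      · fun_prop
    · intro y hy
      rw [interior_Ici] at hy
      exact ((hd y hy).differentiableAt).differentiableWithinAt
    · intro y hy
      rw [interior_Ici] at hy
      have hy' : 0 < y := hy
      rw [(hd y hy').deriv]
      have h1y : (0 : ℝ) < 1 + y := by linarith
      have h4 : 1 / (1 + y) - (1 - y) = y ^ 2 / (1 + y) := by
        field_simp
        ring
      rw [h4]
      positivity
  have h0 : (fun t : ℝ => Real.log (1 + t) - (t - t ^ 2 / 2)) 0 ≤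
      (fun t : ℝ => Real.log (1 + t) - (t - t ^ 2 / 2)) x :=
    key (Set.self_mem_Ici) hx hx
  simp at h0
  linarith

lemma log_one_add_le (x : ℝ) (hx : 0 ≤ x) :
    Real.log (1 + x) ≤ x - x ^ 2 / 2 + x ^ 3 / 3 := by
  have key : MonotoneOn (fun t : ℝ => (t - t ^ 2 / 2 + t ^ 3 / 3) - Real.log (1 + t))
      (Set.Ici 0) := by
    have hd : ∀ y : ℝ, 0 < y →
        HasDerivAt (fun t : ℝ => (t - t ^ 2 / 2 + t ^ 3 / 3) - Real.log (1 + t))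
          ((1 - y + y ^ 2) - 1 / (1 + y)) y := by
      intro y hy
      have h3 : HasDerivAt (fun t : ℝ => t - t ^ 2 / 2 + t ^ 3 / 3) (1 - y + y ^ 2) y := by
        have := (((hasDerivAt_id y).sub ((hasDerivAt_pow 2 y).div_const 2)).add
          ((hasDerivAt_pow 3 y).div_const 3))
        refine this.congr_deriv ?_
        push_cast; ring
      exact h3.sub (hasDerivAt_aux y (by linarith))
    apply monotoneOn_of_deriv_nonneg (convex_Ici 0)
    · apply ContinuousOn.sub
      · fun_prop
      · exact (Real.continuousOn_log.comp (by fun_prop)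
          (fun t ht => by simp only [Set.mem_Ici] at ht; simp; positivity)).congr
          (fun t ht => rfl)
    · intro y hy
      rw [interior_Ici] at hy
      exact ((hd y hy).differentiableAt).differentiableWithinAt
    · intro y hy
      rw [interior_Ici] at hy
      have hy' : 0 < y := hy
      rw [(hd y hy').deriv]
      have h1y : (0 : ℝ) < 1 + y := by linarith
      have h4 : (1 - y + y ^ 2) - 1 / (1 + y) = y ^ 3 / (1 + y) := by
        field_simp
        ring
      rw [h4]
      positivity
  have h0 : (fun t : ℝ => (t - t ^ 2 / 2 + t ^ 3 / 3) - Real.log (1 + t)) 0 ≤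
      (fun t : ℝ => (t - t ^ 2 / 2 + t ^ 3 / 3) - Real.log (1 + t)) x :=
    key (Set.self_mem_Ici) hx hx
  simp at h0
  linarith

theorem risingFac_sharp_bounds (a : ℝ) (ha : 0 < a) (b : ℕ) (hb : (b : ℝ) < a + 1) :
    1 ≤ risingFac a b /
        (a ^ b * Real.exp ((b : ℝ) * ((b : ℝ) - 1) / (2 * a) -
          (b : ℝ) * ((b : ℝ) - 1) * (2 * (b : ℝ) - 1) / (12 * a ^ 2))) ∧
    risingFac a b /
        (a ^ b * Real.exp ((b : ℝ) * ((b : ℝ) - 1) / (2 * a) -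
          (b : ℝ) * ((b : ℝ) - 1) * (2 * (b : ℝ) - 1) / (12 * a ^ 2))) ≤
      Real.exp ((b : ℝ) ^ 4 / (12 * a ^ 3)) := by
  set E : ℝ := (b : ℝ) * ((b : ℝ) - 1) / (2 * a) -
      (b : ℝ) * ((b : ℝ) - 1) * (2 * (b : ℝ) - 1) / (12 * a ^ 2) with hE
  have hap : (0 : ℝ) < a ^ b := pow_pos ha b
  have hden : (0 : ℝ) < a ^ b * Real.exp E := by positivity
  have hpos : ∀ j ∈ Finset.range b, (0 : ℝ) < 1 + (j : ℝ) / a := by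
    intro j _; positivity
  have hprod : risingFac a b = a ^ b * ∏ j ∈ Finset.range b, (1 + (j : ℝ) / a) := by
    unfold risingFac
    have hc : (a : ℝ) ^ b = ∏ _j ∈ Finset.range b, a := by
      rw [Finset.prod_const, Finset.card_range]
    rw [hc, ← Finset.prod_mul_distrib]
    refine Finset.prod_congr rfl fun j _ => ?_
    field_simp
  have hlog : Real.log (∏ j ∈ Finset.range b, (1 + (j : ℝ) / a)) =
      ∑ j ∈ Finset.range b, Real.log (1 + (j : ℝ) / a) :=
    Real.log_prod (fun j hj => (hpos j hj).ne')
  have hexp : (∏ j ∈ Finset.range b, (1 + (j : ℝ) / a)) =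
      Real.exp (∑ j ∈ Finset.range b, Real.log (1 + (j : ℝ) / a)) := by
    rw [← hlog, Real.exp_log (Finset.prod_pos hpos)]
  set S : ℝ := ∑ j ∈ Finset.range b, Real.log (1 + (j : ℝ) / a) with hS
  -- lower bound on the log-sum
  have hsumE : ∑ j ∈ Finset.range b, ((j : ℝ) / a - ((j : ℝ) / a) ^ 2 / 2) = E := by
    have h1 : ∀ j : ℕ, ((j : ℝ) / a - ((j : ℝ) / a) ^ 2 / 2)
        = (j : ℝ) * (1 / a) - (j : ℝ) ^ 2 * (1 / (2 * a ^ 2)) := by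
      intro j; field_simp
    rw [Finset.sum_congr rfl (fun j _ => h1 j), Finset.sum_sub_distrib,
      ← Finset.sum_mul, ← Finset.sum_mul, sum_id_real, sum_sq_real, hE]
    field_simp
    ring
  have hlower : E ≤ S := by
    rw [← hsumE, hS]
    refine Finset.sum_le_sum fun j _ => ?_
    exact log_one_add_ge _ (by positivity)
  -- upper bound on the log-sum
  have hsumU : ∑ j ∈ Finset.range b, ((j : ℝ) / a - ((j : ℝ) / a) ^ 2 / 2 + ((j : ℝ) / a) ^ 3 / 3)
      = E + (b : ℝ) ^ 2 * ((b : ℝ) - 1) ^ 2 / (12 * a ^ 3) := by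
    have h1 : ∀ j : ℕ, ((j : ℝ) / a - ((j : ℝ) / a) ^ 2 / 2 + ((j : ℝ) / a) ^ 3 / 3)
        = ((j : ℝ) / a - ((j : ℝ) / a) ^ 2 / 2) + (j : ℝ) ^ 3 * (1 / (3 * a ^ 3)) := by
      intro j; field_simp
    rw [Finset.sum_congr rfl (fun j _ => h1 j), Finset.sum_add_distrib, hsumE,
      ← Finset.sum_mul, sum_cube_real]
    field_simp
    ring
  have hupper : S ≤ E + (b : ℝ) ^ 4 / (12 * a ^ 3) := by
    have h2 : S ≤ E + (b : ℝ) ^ 2 * ((b : ℝ) - 1) ^ 2 / (12 * a ^ 3) := by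
      rw [← hsumU, hS]
      refine Finset.sum_le_sum fun j _ => ?_
      exact log_one_add_le _ (by positivity)
    have h3 : (b : ℝ) ^ 2 * ((b : ℝ) - 1) ^ 2 ≤ (b : ℝ) ^ 4 := by
      have : (b : ℝ) = 0 ∨ 1 ≤ (b : ℝ) := by
        rcases Nat.eq_zero_or_pos b with h | h
        · left; exact_mod_cast h
        · right; exact_mod_cast h
      rcases this with h | h
      · simp [h]
      · nlinarith
    have h4 : (b : ℝ) ^ 2 * ((b : ℝ) - 1) ^ 2 / (12 * a ^ 3) ≤ (b : ℝ) ^ 4 / (12 * a ^ 3) :=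
      div_le_div_of_nonneg_right h3 (by positivity) |>.trans_eq rfl
    linarith
  constructor
  · rw [one_le_div hden, hprod, hexp]
    exact mul_le_mul_of_nonneg_left (Real.exp_le_exp.2 hlower) hap.le
  · rw [div_le_iff₀ hden, hprod, hexp, mul_comm (Real.exp _) (a ^ b * Real.exp E),
      mul_assoc, ← Real.exp_add]
    exact mul_le_mul_of_nonneg_left (Real.exp_le_exp.2 (by linarith)) hap.le
end
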